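/- Let f(u) = Θ_{2ϖ₁}(u) + 2Θ_{ϖ₂}(u) for the root system G₂, where Θ denotes the generalized cosine. Then in the Chebyshev coordinates z = Θ(u), f equals 6z₁² − 2z₁ − 1, and the global minimum of f over R^n equals −7/6. -/

import Mathlib

noncomputable section
open scoped BigOperators

abbrev EV (n : ℕ) := EuclideanSpace ℝ (Fin n)

/-- The Weyl group of `G₂` is `S₃ × {±1}`, acting on `ℝ³/⟨(1,1,1)⟩` by permutation of the
coordinates and by a global sign. -/
def g2Act (g : Equiv.Perm (Fin 3) × Bool) (μ : EV 3) : EV 3 :=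
  WithLp.toLp 2 (fun j => (if g.2 then (1 : ℝ) else -1) * μ (g.1 j))

/-- The generalized cosine for `G₂`: `Θ_μ(u) = (1/|W|) Σ_{A ∈ W} e^{-2πi⟨Aμ,u⟩}`. -/
def g2Gencos (μ u : EV 3) : ℂ :=
  ((Fintype.card (Equiv.Perm (Fin 3) × Bool) : ℂ))⁻¹ *
    ∑ g : Equiv.Perm (Fin 3) × Bool,
      Complex.exp (-(2 * Real.pi * Complex.I) * ((inner ℝ (g2Act g μ) u : ℝ) : ℂ))

/-- The fundamental weight `ϖ₁ = (0,-1,1)` of `G₂`. -/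
def g2ϖ₁ : EV 3 := WithLp.toLp 2 (fun j => ![0, -1, 1] j : Fin 3 → ℝ)

/-- The fundamental weight `ϖ₂ = (-1,-1,2)` of `G₂`. -/
def g2ϖ₂ : EV 3 := WithLp.toLp 2 (fun j => ![-1, -1, 2] j : Fin 3 → ℝ)

/-- The invariant trigonometric polynomial `f = Θ_{2ϖ₁} + 2 Θ_{ϖ₂}`. -/
def g2f (u : EV 3) : ℂ := g2Gencos ((2 : ℝ) • g2ϖ₁) u + 2 * g2Gencos g2ϖ₂ u

/-! ### Auxiliary machinery -/

/-- Shorthand for the exponential terms appearing in the generalized cosine. -/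
def E (t : ℝ) : ℂ := Complex.exp (-(2 * Real.pi * Complex.I) * (t : ℂ))

/-- An explicit enumeration of the six permutations of `Fin 3`. -/
def pm : Fin 6 → Equiv.Perm (Fin 3) := fun k =>
  ⟨fun j => ![![0,1,2],![0,2,1],![1,0,2],![2,1,0],![1,2,0],![2,0,1]] k j,
   fun j => ![![0,1,2],![0,2,1],![1,0,2],![2,1,0],![2,0,1],![1,2,0]] k j,
   by revert k; decide, by revert k; decide⟩

lemma pm_bij : Function.Bijective pm := by
  rw [Fintype.bijective_iff_injective_and_card]
  constructor
  · intro a b h; revert h; revert a b; decide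
  · decide

/-- Fully explicit form of the generalized cosine. -/
lemma gencos_expand (μ u : EV 3) : g2Gencos μ u = (12:ℂ)⁻¹ *
    ∑ k : Fin 6, (E (μ (pm k 0) * u 0 + μ (pm k 1) * u 1 + μ (pm k 2) * u 2)
      + E (-(μ (pm k 0) * u 0 + μ (pm k 1) * u 1 + μ (pm k 2) * u 2))) := by
  rw [g2Gencos, Fintype.sum_prod_type]
  rw [← Fintype.sum_bijective pm pm_bij _ _ (fun k => rfl)]
  have hc : ((Fintype.card (Equiv.Perm (Fin 3) × Bool) : ℂ)) = 12 := by
    rw [Fintype.card_prod, Fintype.card_perm]; norm_num [Nat.factorial]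
  rw [hc]
  congr 1
  refine Finset.sum_congr rfl fun k _ => ?_
  rw [Fintype.sum_bool]
  simp only [g2Act, E, PiLp.inner_apply, RCLike.inner_apply, conj_trivial, Fin.sum_univ_three,
    if_true, if_false]
  push_cast
  ring_nf

@[simp] lemma pm_0_0 : pm 0 (0 : Fin 3) = 0 := rfl
@[simp] lemma pm_0_1 : pm 0 (1 : Fin 3) = 1 := rfl
@[simp] lemma pm_0_2 : pm 0 (2 : Fin 3) = 2 := rfl
@[simp] lemma pm_1_0 : pm 1 (0 : Fin 3) = 0 := rfl
@[simp] lemma pm_1_1 : pm 1 (1 : Fin 3) = 2 := rfl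
@[simp] lemma pm_1_2 : pm 1 (2 : Fin 3) = 1 := rfl
@[simp] lemma pm_2_0 : pm 2 (0 : Fin 3) = 1 := rfl
@[simp] lemma pm_2_1 : pm 2 (1 : Fin 3) = 0 := rfl
@[simp] lemma pm_2_2 : pm 2 (2 : Fin 3) = 2 := rfl
@[simp] lemma pm_3_0 : pm 3 (0 : Fin 3) = 2 := rfl
@[simp] lemma pm_3_1 : pm 3 (1 : Fin 3) = 1 := rfl
@[simp] lemma pm_3_2 : pm 3 (2 : Fin 3) = 0 := rfl
@[simp] lemma pm_4_0 : pm 4 (0 : Fin 3) = 1 := rfl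
@[simp] lemma pm_4_1 : pm 4 (1 : Fin 3) = 2 := rfl
@[simp] lemma pm_4_2 : pm 4 (2 : Fin 3) = 0 := rfl
@[simp] lemma pm_5_0 : pm 5 (0 : Fin 3) = 2 := rfl
@[simp] lemma pm_5_1 : pm 5 (1 : Fin 3) = 0 := rfl
@[simp] lemma pm_5_2 : pm 5 (2 : Fin 3) = 1 := rfl

lemma E_add (s t : ℝ) : E (s + t) = E s * E t := by
  simp only [E]; rw [← Complex.exp_add]; push_cast; ring_nf

lemma E_neg (t : ℝ) : E (-t) = (E t)⁻¹ := by
  simp only [E]; rw [← Complex.exp_neg]; push_cast; ring_nf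

lemma E_two_mul (t : ℝ) : E (2 * t) = E t * E t := by
  rw [two_mul, E_add]

lemma E_zero : E 0 = 1 := by simp [E]

lemma E_ne (t : ℝ) : E t ≠ 0 := Complex.exp_ne_zero _

lemma E_cos (t : ℝ) : E t = Real.cos (2 * Real.pi * t) - Real.sin (2 * Real.pi * t) * Complex.I := by
  rw [E, show -(2 * (Real.pi:ℂ) * Complex.I) * (t:ℂ) = ((-(2 * Real.pi * t) : ℝ) : ℂ) * Complex.I
    by push_cast; ring, Complex.exp_mul_I, ← Complex.ofReal_cos, ← Complex.ofReal_sin,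
    Real.cos_neg, Real.sin_neg]
  push_cast; ring

lemma E_conj (t : ℝ) : (starRingEnd ℂ) (E t) = E (-t) := by
  rw [E, E, ← Complex.exp_conj]
  congr 1
  simp only [map_mul, map_neg, Complex.conj_I, Complex.conj_ofReal, map_ofNat]
  push_cast; ring

@[simp] lemma w1_0 : g2ϖ₁ 0 = 0 := rfl
@[simp] lemma w1_1 : g2ϖ₁ 1 = -1 := rfl
@[simp] lemma w1_2 : g2ϖ₁ 2 = 1 := rfl
@[simp] lemma w2_0 : g2ϖ₂ 0 = -1 := rfl
@[simp] lemma w2_1 : g2ϖ₂ 1 = -1 := rfl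
@[simp] lemma w2_2 : g2ϖ₂ 2 = 2 := rfl

set_option maxHeartbeats 1000000 in
lemma part1 (u : EV 3) :
    g2f u = 6 * (g2Gencos g2ϖ₁ u) ^ 2 - 2 * g2Gencos g2ϖ₁ u - 1 := by
  rw [g2f, gencos_expand, gencos_expand, gencos_expand]
  simp only [Fin.sum_univ_six, pm_0_0, pm_0_1, pm_0_2, pm_1_0, pm_1_1, pm_1_2, pm_2_0,
    pm_2_1, pm_2_2, pm_3_0, pm_3_1, pm_3_2, pm_4_0, pm_4_1, pm_4_2, pm_5_0, pm_5_1, pm_5_2,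
    Pi.smul_apply, PiLp.smul_apply, smul_eq_mul, w1_0, w1_1, w1_2, w2_0, w2_1, w2_2]
  simp only [mul_zero, mul_one, mul_neg, zero_mul, one_mul, neg_one_mul, neg_mul, neg_neg,
    zero_add, add_zero, sub_eq_add_neg, neg_add, E_add, E_neg, E_two_mul, E_zero]
  have hX : E (u 0) * (E (u 0))⁻¹ = 1 := mul_inv_cancel₀ (E_ne (u 0))
  have hY : E (u 1) * (E (u 1))⁻¹ = 1 := mul_inv_cancel₀ (E_ne (u 1))
  have hZ : E (u 2) * (E (u 2))⁻¹ = 1 := mul_inv_cancel₀ (E_ne (u 2))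
  linear_combination ((-1/3)*(E (u 2))*(E (u 2))⁻¹ + (-1/3)*(E (u 1))⁻¹*(E (u 2)) + (-1/3)*(E (u 1))*(E (u 2))⁻¹ + (-1/3)*(E (u 1))*(E (u 1))⁻¹) * hX + ((-1/3) + (-1/3)*(E (u 2))*(E (u 2))⁻¹ + (-1/3)*(E (u 0))⁻¹*(E (u 2)) + (-1/3)*(E (u 0))*(E (u 2))⁻¹) * hY + ((-2/3) + (-1/3)*(E (u 0))⁻¹*(E (u 1)) + (-1/3)*(E (u 0))*(E (u 1))⁻¹) * hZ

lemma gencos_real (μ u : EV 3) : ∃ r : ℝ, g2Gencos μ u = (r : ℂ) := by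
  refine ⟨(g2Gencos μ u).re, ?_⟩
  refine (Complex.conj_eq_iff_re.mp ?_).symm
  rw [gencos_expand]
  rw [map_mul, map_sum]
  congr 1
  · simp [map_inv₀, map_ofNat]
  refine Finset.sum_congr rfl fun k _ => ?_
  rw [map_add, E_conj, E_conj, neg_neg, add_comm]

def u₀ : EV 3 := WithLp.toLp 2 (fun j => ![0, 1/6, 1/3] j : Fin 3 → ℝ)
@[simp] lemma u0_0 : u₀ 0 = 0 := rfl
@[simp] lemma u0_1 : u₀ 1 = 1/6 := rfl
@[simp] lemma u0_2 : u₀ 2 = 1/3 := rfl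

lemma pair6 : E (1/6 : ℝ) + E (-(1/6) : ℝ) = 1 := by
  rw [E_cos, E_cos, show (2:ℝ)*Real.pi*(-(1/6)) = -(2*Real.pi*(1/6)) by ring, Real.cos_neg,
    Real.sin_neg, show (2:ℝ)*Real.pi*(1/6) = Real.pi/3 by ring, Real.cos_pi_div_three]
  push_cast; ring

lemma pair3 : E (1/3 : ℝ) + E (-(1/3) : ℝ) = -1 := by
  rw [E_cos, E_cos, show (2:ℝ)*Real.pi*(-(1/3)) = -(2*Real.pi*(1/3)) by ring, Real.cos_neg,
    Real.sin_neg, show (2:ℝ)*Real.pi*(1/3) = Real.pi - Real.pi/3 by ring, Real.cos_pi_sub,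
    Real.cos_pi_div_three]
  push_cast; ring

lemma z_val : g2Gencos g2ϖ₁ u₀ = 1/6 := by
  rw [gencos_expand]
  simp only [Fin.sum_univ_six, pm_0_0, pm_0_1, pm_0_2, pm_1_0, pm_1_1, pm_1_2, pm_2_0,
    pm_2_1, pm_2_2, pm_3_0, pm_3_1, pm_3_2, pm_4_0, pm_4_1, pm_4_2, pm_5_0, pm_5_1, pm_5_2,
    w1_0, w1_1, w1_2, u0_0, u0_1, u0_2]
  norm_num
  linear_combination (1/3 : ℂ) * pair6 + (1/6 : ℂ) * pair3

theorem statement5 :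
    (∀ u : EV 3, g2f u = 6 * (g2Gencos g2ϖ₁ u) ^ 2 - 2 * g2Gencos g2ϖ₁ u - 1) ∧
    IsLeast { x : ℝ | ∃ u : EV 3, g2f u = (x : ℂ) } (-7 / 6) := by
  refine ⟨part1, ⟨u₀, ?_⟩, ?_⟩
  · rw [part1, z_val]; push_cast; norm_num
  · rintro x ⟨u, hu⟩
    obtain ⟨r, hr⟩ := gencos_real g2ϖ₁ u
    rw [part1, hr] at hu
    have h : ((6*r^2 - 2*r - 1 : ℝ) : ℂ) = (x : ℂ) := by push_cast; linear_combination hu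
    have h2 := Complex.ofReal_inj.mp h
    nlinarith [sq_nonneg (r - 1/6)]
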